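/- Suppose G is not compact. Let ω be an α-invariant state on A, and let a ∈ A⁺ be such that there is a constant K with ‖p_λ(a)‖ ≤ K for every λ ∈ ℬ(G). Then ω(a) = 0. -/

import Mathlib

open MeasureTheory
open scoped ComplexOrder Pointwise

/-- In a noncompact locally compact group, a Haar measure admits compact closed sets of
arbitrarily large (finite) measure. -/
lemma exists_isCompact_isClosed_measure_gt
    {G : Type*} [Group G] [TopologicalSpace G] [IsTopologicalGroup G]
    [LocallyCompactSpace G] [MeasurableSpace G] [BorelSpace G] [NoncompactSpace G]
    (μ : Measure G) [μ.IsHaarMeasure] (r : ℝ) :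
    ∃ L : Set G, IsCompact L ∧ IsClosed L ∧ r < (μ L).toReal := by
  obtain ⟨K, K1, hK, Kclosed⟩ : ∃ K ∈ nhds (1 : G), IsCompact K ∧ IsClosed K :=
    exists_mem_nhds_isCompact_isClosed 1
  have K_pos : 0 < μ K := μ.measure_pos_of_mem_nhds K1
  have K_fin : μ K < ⊤ := hK.measure_lt_top
  have A : ∀ L : Set G, IsCompact L → ∃ g : G, Disjoint L (g • K) := fun L hL =>
    exists_disjoint_smul_of_isCompact hL hK
  choose! g hg using A
  set L : ℕ → Set G := fun n => (fun T => T ∪ g T • K)^[n] K with hL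
  have Lcompact : ∀ n, IsCompact (L n) := by
    intro n
    induction' n with n IH
    · exact hK
    · simp_rw [L, Function.iterate_succ']
      exact IsCompact.union IH (hK.smul (g (L n)))
  have Lclosed : ∀ n, IsClosed (L n) := by
    intro n
    induction' n with n IH
    · exact Kclosed
    · simp_rw [L, Function.iterate_succ']
      exact IsClosed.union IH (Kclosed.smul (g (L n)))
  have M : ∀ n, μ (L n) = (n + 1 : ℕ) * μ K := by
    intro n
    induction' n with n IH
    · simp only [L, one_mul, Nat.cast_one, Function.iterate_zero, id, Nat.zero_add]
    · calc
        μ (L (n + 1)) = μ (L n) + μ (g (L n) • K) := by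
          simp_rw [L, Function.iterate_succ']
          exact measure_union' (hg _ (Lcompact _)) (Lclosed _).measurableSet
        _ = (n + 1 + 1 : ℕ) * μ K := by
          simp only [IH, measure_smul, add_mul, Nat.cast_add, Nat.cast_one, one_mul]
  set c : ℝ := (μ K).toReal with hc
  have c_pos : 0 < c := ENNReal.toReal_pos K_pos.ne' K_fin.ne
  obtain ⟨n, hn⟩ : ∃ n : ℕ, r / c < n := exists_nat_gt (r / c)
  refine ⟨L n, Lcompact n, Lclosed n, ?_⟩
  have : (μ (L n)).toReal = (n + 1 : ℕ) * c := by
    rw [M n, ENNReal.toReal_mul, ENNReal.toReal_natCast]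
  rw [this]
  have h1 : r < n * c := (div_lt_iff₀ c_pos).1 hn
  have h2 : (n : ℝ) * c ≤ (n + 1 : ℕ) * c := by
    apply mul_le_mul_of_nonneg_right _ c_pos.le
    exact_mod_cast Nat.le_succ n
  linarith

/-- If `G` is not compact, `α` is a strongly continuous action of `G` on a
C*-algebra `A`, `ω` is an `α`-invariant state on `A`, and `a ∈ A⁺` satisfies
`‖p_λ(a)‖ ≤ K` for all `λ ∈ ℬ(G)`, then `ω(a) = 0`. -/
theorem stmt1
    {G : Type*} [Group G] [TopologicalSpace G] [IsTopologicalGroup G]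
    [LocallyCompactSpace G] [MeasurableSpace G] [BorelSpace G]
    (μ : Measure G) [μ.IsHaarMeasure]
    (hG : ¬ IsCompact (Set.univ : Set G))
    {A : Type*} [NonUnitalCStarAlgebra A] [PartialOrder A] [StarOrderedRing A]
    (α : G → (A ≃⋆ₐ[ℂ] A))
    (hone : ∀ a : A, α 1 a = a)
    (hmul : ∀ (x y : G) (a : A), α (x * y) a = α x (α y a))
    (hα : ∀ a : A, Continuous fun x => α x a)
    (ω : A →L[ℂ] ℂ) (hωpos : ∀ a : A, 0 ≤ a → 0 ≤ ω a) (hωnorm : ‖ω‖ = 1)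
    (hωinv : ∀ (x : G) (a : A), ω (α x a) = ω a)
    (a : A) (ha : 0 ≤ a)
    (K : ℝ)
    (hK : ∀ lam : G → ℝ, Measurable lam → HasCompactSupport lam →
      (∀ x, 0 ≤ lam x) → (∀ x, lam x ≤ 1) →
      ‖∫ x, (lam x : ℂ) • (α x a) ∂μ‖ ≤ K) :
    ω a = 0 := by
  have hNC : NoncompactSpace G := by
    rw [← not_compactSpace_iff]
    exact fun h => hG h.isCompact_univ
  set c : ℂ := ω a with hc
  have hc0 : 0 ≤ c := hωpos a ha
  obtain ⟨hre, him⟩ : (0 : ℝ) ≤ c.re ∧ (0 : ℝ) = c.im := by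
    simpa [Complex.le_def] using hc0
  -- it suffices to show the real part vanishes
  suffices hre0 : c.re ≤ 0 by
    have : c.re = 0 := le_antisymm hre0 hre
    exact Complex.ext this him.symm
  by_contra hpos
  push_neg at hpos
  obtain ⟨L, Lcomp, Lclosed, hLbig⟩ :=
    exists_isCompact_isClosed_measure_gt μ (K / c.re)
  set lam : G → ℝ := Set.indicator L (fun _ => (1 : ℝ)) with hlam
  have Lmeas : MeasurableSet L := Lclosed.measurableSet
  have hmeas : Measurable lam := measurable_const.indicator Lmeas
  have hsupp : HasCompactSupport lam :=
    HasCompactSupport.intro Lcomp fun x hx => Set.indicator_of_notMem hx _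
  have h0 : ∀ x, 0 ≤ lam x := fun x => by
    by_cases hx : x ∈ L
    · simp [hlam, Set.indicator_of_mem hx]
    · simp [hlam, Set.indicator_of_notMem hx]
  have h1 : ∀ x, lam x ≤ 1 := fun x => by
    by_cases hx : x ∈ L
    · simp [hlam, Set.indicator_of_mem hx]
    · simp [hlam, Set.indicator_of_notMem hx]
  have hbound := hK lam hmeas hsupp h0 h1
  -- rewrite the integrand as an indicator
  have hfun : (fun x => (lam x : ℂ) • α x a) = Set.indicator L (fun x => (α x a : A)) := by
    funext x
    by_cases hx : x ∈ L
    · simp [hlam, Set.indicator_of_mem hx]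
    · simp [hlam, Set.indicator_of_notMem hx]
  have hint : IntegrableOn (fun x => (α x a : A)) L μ :=
    ((hα a).continuousOn).integrableOn_compact' Lcomp Lmeas
  have hIeq : (∫ x, (lam x : ℂ) • α x a ∂μ) = ∫ x in L, (α x a : A) ∂μ := by
    rw [hfun, integral_indicator Lmeas]
  -- apply ω
  have hωI : ω (∫ x in L, (α x a : A) ∂μ) = ((μ L).toReal : ℂ) * c := by
    rw [← ContinuousLinearMap.integral_comp_comm ω hint]
    simp_rw [hωinv]
    rw [setIntegral_const, Complex.real_smul]
    rfl
  have hnormle : ‖ω (∫ x in L, (α x a : A) ∂μ)‖ ≤ K := by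
    calc ‖ω (∫ x in L, (α x a : A) ∂μ)‖
        ≤ ‖ω‖ * ‖∫ x in L, (α x a : A) ∂μ‖ := ω.le_opNorm _
      _ = ‖∫ x, (lam x : ℂ) • α x a ∂μ‖ := by rw [hωnorm, one_mul, hIeq]
      _ ≤ K := hbound
  rw [hωI] at hnormle
  have hnorm_eq : ‖((μ L).toReal : ℂ) * c‖ = (μ L).toReal * ‖c‖ := by
    rw [norm_mul, Complex.norm_real, Real.norm_of_nonneg ENNReal.toReal_nonneg]
  have hcre_le : c.re ≤ ‖c‖ := by
    simpa using Complex.re_le_norm c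
  have : (μ L).toReal * c.re ≤ K := by
    calc (μ L).toReal * c.re ≤ (μ L).toReal * ‖c‖ :=
          mul_le_mul_of_nonneg_left hcre_le ENNReal.toReal_nonneg
      _ = ‖((μ L).toReal : ℂ) * c‖ := hnorm_eq.symm
      _ ≤ K := hnormle
  have : K < (μ L).toReal * c.re := by
    have := (div_lt_iff₀ hpos).1 hLbig
    linarith
  linarith
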